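/- Let p ∈ (1,∞) and δ ≥ 0 (change of shift). For every ε ∈ (0,1) there exists a constant c_ε > 0 depending only on p and ε such that for all 3×3 real matrices P, Q and all t ≥ 0 one has both φ_{|P|}(t) ≤ c_ε·φ_{|Q|}(t) + ε·φ_{|P|}(|P−Q|) and φ_{|P|}(t) ≤ c_ε·φ_{|Q|}(t) + ε·φ_{|Q|}(|P−Q|), where |·| denotes the Frobenius norm. -/

import Mathlib

open Real MeasureTheory Set

/-- The derivative `φ'(t) = (δ+t)^(p-2)·t` of the N-function `φ = φ_{p,δ}`. -/
noncomputable def phiDeriv (p δ t : ℝ) : ℝ := (δ + t) ^ (p - 2) * t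

/-- The shifted N-function `φ_a(t) = ∫₀ᵗ φ'(a+s)·s/(a+s) ds`. -/
noncomputable def phiShift (p δ a t : ℝ) : ℝ :=
  ∫ s in (0:ℝ)..t, phiDeriv p δ (a + s) * s / (a + s)

/-- The Frobenius norm of a 3×3 real matrix. -/
noncomputable def frob (P : Matrix (Fin 3) (Fin 3) ℝ) : ℝ :=
  Real.sqrt (∑ i, ∑ j, (P i j) ^ 2)

/-- Auxiliary: the simplified shifted N-function with shift `K`. -/
noncomputable def Phi (p K t : ℝ) : ℝ := ∫ s in (0:ℝ)..t, (K + s) ^ (p - 2) * s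

lemma Phi_nonneg (p K t : ℝ) (hK : 0 ≤ K) (ht : 0 ≤ t) : 0 ≤ Phi p K t := by
  apply intervalIntegral.integral_nonneg ht
  intro s hs
  exact mul_nonneg (Real.rpow_nonneg (by linarith [hs.1]) _) hs.1

lemma integrable_f (p K t : ℝ) (hp : 1 < p) (hK : 0 ≤ K) (ht : 0 ≤ t) :
    IntervalIntegrable (fun s => (K + s) ^ (p - 2) * s) volume 0 t := by
  rcases eq_or_lt_of_le hK with hK0 | hK0
  · rw [intervalIntegrable_iff, uIoc_of_le ht]
    apply (MeasureTheory.IntegrableOn.congr_fun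
      (f := fun s : ℝ => s ^ (p - 1)) ?_ ?_ measurableSet_Ioc)
    · have := intervalIntegral.intervalIntegrable_rpow' (a := 0) (b := t)
        (r := p - 1) (by linarith)
      rwa [intervalIntegrable_iff, uIoc_of_le ht] at this
    · intro s hs
      simp only
      rw [← hK0, zero_add, ← Real.rpow_add_one (ne_of_gt hs.1), show p - 2 + 1 = p - 1 by ring]
  · apply ContinuousOn.intervalIntegrable
    apply ContinuousOn.mul ?_ continuousOn_id
    apply ContinuousOn.rpow_const (by fun_prop)
    intro x hx
    left
    rw [uIcc_of_le ht] at hx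
    nlinarith [hx.1]

lemma lemmaUp (p X Y L : ℝ) (hp2 : 2 ≤ p) (hX : 0 ≤ X) (hY : 0 ≤ Y) (hL : 0 ≤ L)
    (h : X ≤ L * Y) : X ^ (p - 2) ≤ L ^ (p - 2) * Y ^ (p - 2) := by
  rw [← Real.mul_rpow hL hY]
  exact Real.rpow_le_rpow hX h (by linarith)

lemma lemmaDown (p X Y L : ℝ) (hp2 : p ≤ 2) (hX : 0 < X) (hY : 0 < Y) (hL : 0 ≤ L)
    (h : Y ≤ L * X) : X ^ (p - 2) ≤ L ^ (2 - p) * Y ^ (p - 2) := by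
  have key : Y ^ (2 - p) ≤ L ^ (2 - p) * X ^ (2 - p) := by
    rw [← Real.mul_rpow hL hX.le]
    exact Real.rpow_le_rpow hY.le h (by linarith)
  have hXp : (0:ℝ) < X ^ (2 - p) := Real.rpow_pos_of_pos hX _
  have hYp : (0:ℝ) < Y ^ (2 - p) := Real.rpow_pos_of_pos hY _
  have e1 : X ^ (p - 2) = (X ^ (2 - p))⁻¹ := by
    rw [show p - 2 = -(2 - p) by ring, Real.rpow_neg hX.le]
  have e2 : Y ^ (p - 2) = (Y ^ (2 - p))⁻¹ := by
    rw [show p - 2 = -(2 - p) by ring, Real.rpow_neg hY.le]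
  rw [e1, e2, inv_eq_one_div, inv_eq_one_div, mul_one_div, div_le_div_iff₀ hXp hYp]
  nlinarith

lemma ident (p K t s : ℝ) (hK : 0 ≤ K) (ht : 0 < t) (hs : 0 < s) :
    ((K + t) * s / t) ^ (p - 2) * s = (K + t) ^ (p - 2) * t ^ (2 - p) * s ^ (p - 1) := by
  have h1 : ((K + t) * s / t) ^ (p - 2)
      = (K + t) ^ (p - 2) * s ^ (p - 2) / t ^ (p - 2) := by
    rw [Real.div_rpow (by positivity) ht.le, Real.mul_rpow (by positivity) hs.le]
  rw [h1, show (2 : ℝ) - p = -(p - 2) by ring, Real.rpow_neg ht.le,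
    show p - 1 = p - 2 + 1 by ring, Real.rpow_add_one hs.ne']
  field_simp

lemma mediant (K s t : ℝ) (hK : 0 ≤ K) (hs : 0 ≤ s) (hst : s ≤ t) (ht : 0 < t) :
    (K + t) * s / t ≤ K + s := by
  rw [div_le_iff₀ ht]
  nlinarith

lemma int_rpow (p C t : ℝ) (hp : 1 < p) (ht : 0 ≤ t) :
    ∫ s in (0:ℝ)..t, C * s ^ (p - 1) = C * (t ^ p / p) := by
  rw [intervalIntegral.integral_const_mul,
    integral_rpow (Or.inl (by linarith : (-1:ℝ) < p - 1)),
    show p - 1 + 1 = p by ring, Real.zero_rpow (by linarith : p ≠ 0)]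
  ring

lemma int_id (C t : ℝ) : ∫ s in (0:ℝ)..t, C * s = C * (t ^ 2 / 2) := by
  rw [intervalIntegral.integral_const_mul, integral_id]
  ring

lemma Phi_le (p K t : ℝ) (hp : 1 < p) (hK : 0 ≤ K) (ht : 0 ≤ t) :
    Phi p K t ≤ (K + t) ^ (p - 2) * t ^ 2 := by
  rcases eq_or_lt_of_le ht with ht0 | ht0
  · rw [← ht0]
    simp [Phi]
  rcases le_total 2 p with hp2 | hp2
  · have h1 : Phi p K t ≤ ∫ s in (0:ℝ)..t, (K + t) ^ (p - 2) * s := by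
      apply intervalIntegral.integral_mono_on ht (integrable_f p K t hp hK ht)
        ((continuous_const.mul continuous_id).intervalIntegrable _ _)
      intro s hs
      apply mul_le_mul_of_nonneg_right ?_ hs.1
      exact Real.rpow_le_rpow (by linarith [hs.1]) (by linarith [hs.2]) (by linarith)
    rw [int_id] at h1
    nlinarith [Real.rpow_nonneg (show (0:ℝ) ≤ K + t by linarith) (p - 2), sq_nonneg t]
  · have h1 : Phi p K t ≤ ∫ s in (0:ℝ)..t, ((K + t) ^ (p - 2) * t ^ (2 - p)) * s ^ (p - 1) := by
      apply intervalIntegral.integral_mono_on ht (integrable_f p K t hp hK ht)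
        ((intervalIntegral.intervalIntegrable_rpow' (by linarith)).const_mul _)
      intro s hs
      rcases eq_or_lt_of_le hs.1 with hs0 | hs0
      · rw [← hs0, Real.zero_rpow (by linarith : p - 1 ≠ 0)]
        simp
      · rw [← ident p K t s hK ht0 hs0]
        apply mul_le_mul_of_nonneg_right ?_ hs.1
        have hpos : 0 < (K + t) * s / t := by positivity
        exact Real.rpow_le_rpow_of_nonpos hpos (mediant K s t hK hs.1 hs.2 ht0) (by linarith)
    rw [int_rpow p _ t hp ht] at h1
    have ht2 : t ^ (2 - p) * t ^ p = t ^ 2 := by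
      rw [← Real.rpow_add ht0, show 2 - p + p = (2:ℝ) by ring,
        show (2:ℝ) = ((2:ℕ):ℝ) by norm_num, Real.rpow_natCast]
    have h2 : (K + t) ^ (p - 2) * t ^ (2 - p) * (t ^ p / p) = (K + t) ^ (p - 2) * t ^ 2 / p := by
      rw [← ht2]; ring
    rw [h2] at h1
    have h3 : (0:ℝ) ≤ (K + t) ^ (p - 2) * t ^ 2 := by positivity
    calc Phi p K t ≤ (K + t) ^ (p - 2) * t ^ 2 / p := h1
      _ ≤ (K + t) ^ (p - 2) * t ^ 2 := by
          rw [div_le_iff₀ (by linarith)]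
          nlinarith

lemma Phi_ge (p K t : ℝ) (hp : 1 < p) (hK : 0 ≤ K) (ht : 0 ≤ t) :
    (K + t) ^ (p - 2) * t ^ 2 ≤ 2 * p * Phi p K t := by
  rcases eq_or_lt_of_le ht with ht0 | ht0
  · rw [← ht0]
    simp [Phi]
  have hPhi := Phi_nonneg p K t hK ht
  rcases le_total 2 p with hp2 | hp2
  · have h1 : (∫ s in (0:ℝ)..t, ((K + t) ^ (p - 2) * t ^ (2 - p)) * s ^ (p - 1)) ≤ Phi p K t := by
      apply intervalIntegral.integral_mono_on ht
        ((intervalIntegral.intervalIntegrable_rpow' (by linarith)).const_mul _)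
        (integrable_f p K t hp hK ht)
      intro s hs
      rcases eq_or_lt_of_le hs.1 with hs0 | hs0
      · rw [← hs0, Real.zero_rpow (by linarith : p - 1 ≠ 0)]
        simp
      · rw [← ident p K t s hK ht0 hs0]
        apply mul_le_mul_of_nonneg_right ?_ hs.1
        have hpos : 0 ≤ (K + t) * s / t := by positivity
        exact Real.rpow_le_rpow hpos (mediant K s t hK hs.1 hs.2 ht0) (by linarith)
    rw [int_rpow p _ t hp ht] at h1
    have ht2 : t ^ (2 - p) * t ^ p = t ^ 2 := by
      rw [← Real.rpow_add ht0, show 2 - p + p = (2:ℝ) by ring,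
        show (2:ℝ) = ((2:ℕ):ℝ) by norm_num, Real.rpow_natCast]
    have h2 : (K + t) ^ (p - 2) * t ^ (2 - p) * (t ^ p / p) = (K + t) ^ (p - 2) * t ^ 2 / p := by
      rw [← ht2]; ring
    rw [h2, div_le_iff₀ (by linarith : (0:ℝ) < p)] at h1
    nlinarith
  · have h1 : (∫ s in (0:ℝ)..t, (K + t) ^ (p - 2) * s) ≤ Phi p K t := by
      apply intervalIntegral.integral_mono_on ht
        ((continuous_const.mul continuous_id).intervalIntegrable _ _)
        (integrable_f p K t hp hK ht)
      intro s hs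
      rcases eq_or_lt_of_le hs.1 with hs0 | hs0
      · rw [← hs0]
        simp
      · apply mul_le_mul_of_nonneg_right ?_ hs.1
        exact Real.rpow_le_rpow_of_nonpos (by linarith) (by linarith [hs.2]) (by linarith)
    rw [int_id] at h1
    nlinarith

lemma phiShift_eq (p δ a t : ℝ) (ha : 0 ≤ a) (ht : 0 ≤ t) :
    phiShift p δ a t = Phi p (δ + a) t := by
  apply intervalIntegral.integral_congr
  intro s hs
  rw [uIcc_of_le ht] at hs
  simp only [phiDeriv]
  rcases eq_or_lt_of_le (add_nonneg ha hs.1) with h0 | h0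
  · have hs0 : s = 0 := by nlinarith [hs.1]
    rw [hs0]
    simp
  · have h1 : δ + (a + s) = δ + a + s := by ring
    rw [h1]
    field_simp

lemma frob_eq_norm (P : Matrix (Fin 3) (Fin 3) ℝ) :
    frob P = ‖(WithLp.equiv 2 ((Fin 3 × Fin 3) → ℝ)).symm (fun i => P i.1 i.2)‖ := by
  rw [EuclideanSpace.norm_eq, frob]
  simp only [WithLp.equiv_symm_apply, PiLp.toLp_apply, Real.norm_eq_abs, sq_abs]
  congr 1
  rw [Fintype.sum_prod_type]

lemma frob_nonneg (P : Matrix (Fin 3) (Fin 3) ℝ) : 0 ≤ frob P := Real.sqrt_nonneg _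

lemma frob_sub (P Q : Matrix (Fin 3) (Fin 3) ℝ) : |frob P - frob Q| ≤ frob (P - Q) := by
  rw [frob_eq_norm, frob_eq_norm, frob_eq_norm]
  have h1 : (WithLp.equiv 2 ((Fin 3 × Fin 3) → ℝ)).symm (fun i => (P - Q) i.1 i.2)
      = (WithLp.equiv 2 ((Fin 3 × Fin 3) → ℝ)).symm (fun i => P i.1 i.2)
        - (WithLp.equiv 2 ((Fin 3 × Fin 3) → ℝ)).symm (fun i => Q i.1 i.2) := by
    rw [WithLp.equiv_symm_apply, ← WithLp.toLp_sub]
    congr 1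
  rw [h1]
  exact abs_norm_sub_norm_le _ _

set_option maxHeartbeats 1000000 in
/-- Change of shift: for `p ∈ (1,∞)` and every `ε ∈ (0,1)` there exists `c_ε > 0`
depending only on `p` and `ε` such that for all `δ ≥ 0`, all 3×3 matrices `P, Q`
and all `t ≥ 0`: `φ_{|P|}(t) ≤ c_ε·φ_{|Q|}(t) + ε·φ_{|P|}(|P−Q|)` and
`φ_{|P|}(t) ≤ c_ε·φ_{|Q|}(t) + ε·φ_{|Q|}(|P−Q|)`. -/
theorem shift_change (p : ℝ) (hp : 1 < p) (ε : ℝ) (hε0 : 0 < ε) (hε1 : ε < 1) :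
    ∃ c : ℝ, 0 < c ∧
      ∀ δ : ℝ, 0 ≤ δ → ∀ P Q : Matrix (Fin 3) (Fin 3) ℝ, ∀ t : ℝ, 0 ≤ t →
        phiShift p δ (frob P) t
            ≤ c * phiShift p δ (frob Q) t + ε * phiShift p δ (frob P) (frob (P - Q)) ∧
        phiShift p δ (frob P) t
            ≤ c * phiShift p δ (frob Q) t + ε * phiShift p δ (frob Q) (frob (P - Q)) := by
  have h2e : (1:ℝ) ≤ (2:ℝ) ^ |p - 2| := Real.one_le_rpow one_le_two (abs_nonneg _)
  have h2e0 : (0:ℝ) < (2:ℝ) ^ |p - 2| := Real.rpow_pos_of_pos two_pos _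
  set θ : ℝ := ε / (2 * p * (2:ℝ) ^ |p - 2|) with hθdef
  have hden : (0:ℝ) < 2 * p * (2:ℝ) ^ |p - 2| := by nlinarith
  have hθpos : 0 < θ := div_pos hε0 hden
  have hθ1 : θ ≤ 1 := by
    rw [hθdef, div_le_one hden]
    nlinarith
  have hθε2 : 2 * p * ((2:ℝ) ^ |p - 2|) * θ = ε := by
    rw [hθdef]
    field_simp
  have hθε : 2 * p * θ ≤ ε := by nlinarith
  have hM : (0:ℝ) < (1 + 1/θ) ^ |p - 2| := Real.rpow_pos_of_pos (by positivity) _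
  refine ⟨2 * p * (1 + 1/θ) ^ |p - 2|, mul_pos (by linarith : (0:ℝ) < 2 * p) hM, ?_⟩
  intro δ hδ P Q t ht
  have ha := frob_nonneg P
  have hb := frob_nonneg Q
  have hd := frob_nonneg (P - Q)
  have habs := abs_le.mp (frob_sub P Q)
  set a := frob P with ha'
  set b := frob Q with hb'
  set d := frob (P - Q) with hd'
  rw [phiShift_eq p δ a t ha ht, phiShift_eq p δ b t hb ht,
      phiShift_eq p δ a d ha hd, phiShift_eq p δ b d hb hd]
  set A := δ + a with hA'
  set B := δ + b with hB'
  have hA : 0 ≤ A := by simp only [hA']; linarith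
  have hB : 0 ≤ B := by simp only [hB']; linarith
  have hAB : A ≤ B + d := by simp only [hA', hB']; linarith [habs.2]
  have hBA : B ≤ A + d := by simp only [hA', hB']; linarith [habs.1]
  have hPB := Phi_nonneg p B t hB ht
  have hPAd := Phi_nonneg p A d hA hd
  have hPBd := Phi_nonneg p B d hB hd
  rcases eq_or_lt_of_le ht with ht0 | ht0
  · have hz : ∀ X : ℝ, Phi p X 0 = 0 := fun X => intervalIntegral.integral_same
    rw [← ht0, hz A, hz B]
    constructor <;> · linarith [mul_nonneg hε0.le hPAd, mul_nonneg hε0.le hPBd]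
  have hψA := Phi_le p A t hp hA ht
  rcases le_total t (θ * d) with hcase | hcase
  · -- small t : t ≤ θ·d
    have hd0 : 0 < d := by
      by_contra h
      push_neg at h
      have h7 : θ * d ≤ 0 := mul_nonpos_of_nonneg_of_nonpos hθpos.le h
      linarith
    have htd : t ≤ d := by
      have h7 : θ * d ≤ 1 * d := mul_le_mul_of_nonneg_right hθ1 hd
      linarith
    have hAd0 : 0 < A + d := by linarith
    have hBd0 : 0 < B + d := by linarith
    have hAt0 : 0 < A + t := by linarith
    -- step: ψ_A(t) ≤ θ·ψ_A(d)
    have hstep : (A + t) ^ (p - 2) * t ^ 2 ≤ θ * ((A + d) ^ (p - 2) * d ^ 2) := by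
      rcases le_total p 2 with hp2 | hp2
      · have hL : 1 ≤ d / t := (le_div_iff₀ ht0).mpr (by nlinarith)
        have hYL : A + d ≤ (d / t) * (A + t) := by
          have h5 : (d / t) * (A + t) = (d / t) * A + d := by field_simp
          have h6 := le_mul_of_one_le_left hA hL
          linarith
        have e1 := lemmaDown p (A + t) (A + d) (d / t) hp2 hAt0 hAd0 (by positivity) hYL
        -- (d/t)^(2-p) * t^2 ≤ θ * d^2
        have e2 : (d / t) ^ (2 - p) * t ^ 2 ≤ θ * d ^ 2 := by
          have f0 : (d / t) ^ (2 - p) = d ^ (2 - p) / t ^ (2 - p) :=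
            Real.div_rpow hd0.le ht0.le _
          have ft2 : t ^ (2 - p) * t ^ p = t ^ 2 := by
            rw [← Real.rpow_add ht0, show 2 - p + p = (2:ℝ) by ring,
              show (2:ℝ) = ((2:ℕ):ℝ) by norm_num, Real.rpow_natCast]
          have fd2 : d ^ (2 - p) * d ^ p = d ^ 2 := by
            rw [← Real.rpow_add hd0, show 2 - p + p = (2:ℝ) by ring,
              show (2:ℝ) = ((2:ℕ):ℝ) by norm_num, Real.rpow_natCast]
          have f1 : t ^ p ≤ θ ^ p * d ^ p := by
            rw [← Real.mul_rpow hθpos.le hd0.le]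
            exact Real.rpow_le_rpow ht0.le hcase (by linarith)
          have f2 : θ ^ p ≤ θ := by
            have := Real.rpow_le_rpow_of_exponent_ge hθpos hθ1 (by linarith : (1:ℝ) ≤ p)
            rwa [Real.rpow_one] at this
          have g1 : (0:ℝ) < t ^ (2 - p) := Real.rpow_pos_of_pos ht0 _
          have g2 : (0:ℝ) ≤ d ^ (2 - p) := Real.rpow_nonneg hd0.le _
          have g3 : (0:ℝ) ≤ d ^ p := Real.rpow_nonneg hd0.le _
          have g4 : (0:ℝ) ≤ θ ^ p := Real.rpow_nonneg hθpos.le _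
          have e3 : (d / t) ^ (2 - p) * t ^ 2 = d ^ (2 - p) * t ^ p := by
            rw [f0, ← ft2]
            field_simp
          rw [e3, ← fd2]
          have w1 := mul_le_mul_of_nonneg_left f1 g2
          have w2 := mul_le_mul_of_nonneg_left (mul_le_mul_of_nonneg_right f2 g3) g2
          linarith [w1, w2]
        have e4 : (0:ℝ) ≤ (A + d) ^ (p - 2) := Real.rpow_nonneg hAd0.le _
        calc (A + t) ^ (p - 2) * t ^ 2
            ≤ ((d / t) ^ (2 - p) * (A + d) ^ (p - 2)) * t ^ 2 :=
              mul_le_mul_of_nonneg_right e1 (sq_nonneg t)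
          _ = (A + d) ^ (p - 2) * ((d / t) ^ (2 - p) * t ^ 2) := by ring
          _ ≤ (A + d) ^ (p - 2) * (θ * d ^ 2) := mul_le_mul_of_nonneg_left e2 e4
          _ = θ * ((A + d) ^ (p - 2) * d ^ 2) := by ring
      · have e1 : (A + t) ^ (p - 2) ≤ (A + d) ^ (p - 2) :=
          Real.rpow_le_rpow hAt0.le (by linarith) (by linarith)
        have e2 : t ^ 2 ≤ θ * d ^ 2 := by
          have q1 : t * t ≤ (θ * d) * (θ * d) := mul_le_mul hcase hcase ht (by positivity)
          have q3 : (θ * θ) * (d * d) ≤ θ * (d * d) :=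
            mul_le_mul_of_nonneg_right
              (by nlinarith [mul_le_mul_of_nonneg_right hθ1 hθpos.le] : θ * θ ≤ θ)
              (by positivity)
          nlinarith [q1, q3]
        have e4 : (0:ℝ) ≤ (A + d) ^ (p - 2) := Real.rpow_nonneg hAd0.le _
        calc (A + t) ^ (p - 2) * t ^ 2
            ≤ (A + d) ^ (p - 2) * (θ * d ^ 2) :=
              mul_le_mul e1 e2 (sq_nonneg t) e4
          _ = θ * ((A + d) ^ (p - 2) * d ^ 2) := by ring
    have h2 := Phi_ge p A d hp hA hd
    have h4 := Phi_ge p B d hp hB hd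
    -- ψ_A(d) ≤ 2^|p-2| ψ_B(d)
    have h3 : (A + d) ^ (p - 2) * d ^ 2 ≤ (2:ℝ) ^ |p - 2| * ((B + d) ^ (p - 2) * d ^ 2) := by
      rcases le_total p 2 with hp2 | hp2
      · rw [abs_of_nonpos (by linarith : p - 2 ≤ 0), show -(p - 2) = 2 - p by ring]
        have e1 := lemmaDown p (A + d) (B + d) 2 hp2 hAd0 hBd0 (by norm_num)
          (by linarith)
        calc (A + d) ^ (p - 2) * d ^ 2
            ≤ ((2:ℝ) ^ (2 - p) * (B + d) ^ (p - 2)) * d ^ 2 :=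
              mul_le_mul_of_nonneg_right e1 (sq_nonneg d)
          _ = (2:ℝ) ^ (2 - p) * ((B + d) ^ (p - 2) * d ^ 2) := by ring
      · rw [abs_of_nonneg (by linarith : (0:ℝ) ≤ p - 2)]
        have e1 := lemmaUp p (A + d) (B + d) 2 hp2 hAd0.le hBd0.le (by norm_num)
          (by linarith)
        calc (A + d) ^ (p - 2) * d ^ 2
            ≤ ((2:ℝ) ^ (p - 2) * (B + d) ^ (p - 2)) * d ^ 2 :=
              mul_le_mul_of_nonneg_right e1 (sq_nonneg d)
          _ = (2:ℝ) ^ (p - 2) * ((B + d) ^ (p - 2) * d ^ 2) := by ring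
    have hcPB : (0:ℝ) ≤ 2 * p * (1 + 1/θ) ^ |p - 2| * Phi p B t :=
      mul_nonneg (mul_nonneg (by linarith : (0:ℝ) ≤ 2 * p) hM.le) hPB
    constructor
    · -- Phi A t ≤ c·Phi B t + ε·Phi A d
      have k1 : Phi p A t ≤ θ * (2 * p * Phi p A d) := by
        calc Phi p A t ≤ (A + t) ^ (p - 2) * t ^ 2 := hψA
          _ ≤ θ * ((A + d) ^ (p - 2) * d ^ 2) := hstep
          _ ≤ θ * (2 * p * Phi p A d) := mul_le_mul_of_nonneg_left h2 hθpos.le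
      have k2 : θ * (2 * p * Phi p A d) ≤ ε * Phi p A d := by
        have : θ * (2 * p * Phi p A d) = (2 * p * θ) * Phi p A d := by ring
        rw [this]
        exact mul_le_mul_of_nonneg_right hθε hPAd
      linarith
    · have k1 : Phi p A t ≤ θ * ((2:ℝ) ^ |p - 2| * (2 * p * Phi p B d)) := by
        calc Phi p A t ≤ (A + t) ^ (p - 2) * t ^ 2 := hψA
          _ ≤ θ * ((A + d) ^ (p - 2) * d ^ 2) := hstep
          _ ≤ θ * ((2:ℝ) ^ |p - 2| * ((B + d) ^ (p - 2) * d ^ 2)) :=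
              mul_le_mul_of_nonneg_left h3 hθpos.le
          _ ≤ θ * ((2:ℝ) ^ |p - 2| * (2 * p * Phi p B d)) :=
              mul_le_mul_of_nonneg_left (mul_le_mul_of_nonneg_left h4 h2e0.le) hθpos.le
      have k2 : θ * ((2:ℝ) ^ |p - 2| * (2 * p * Phi p B d)) = ε * Phi p B d := by
        rw [← hθε2]; ring
      rw [k2] at k1
      linarith
  · -- big t : θ·d ≤ t
    have hAt0 : 0 < A + t := by linarith
    have hBt0 : 0 < B + t := by linarith
    have hdt : d ≤ t * (1/θ) := by
      rw [← div_eq_mul_one_div]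
      exact (le_div_iff₀ hθpos).mpr (by linarith)
    have hL1 : (0:ℝ) ≤ 1 + 1/θ := by positivity
    have hiθ : (0:ℝ) < 1/θ := by positivity
    have hstep : (A + t) ^ (p - 2) ≤ (1 + 1/θ) ^ |p - 2| * (B + t) ^ (p - 2) := by
      rcases le_total p 2 with hp2 | hp2
      · rw [abs_of_nonpos (by linarith : p - 2 ≤ 0), show -(p - 2) = 2 - p by ring]
        apply lemmaDown p _ _ _ hp2 hAt0 hBt0 hL1
        have h6 : A * (1/θ) ≥ 0 := by positivity
        have h7 : (1 + 1/θ) * (A + t) = A + t + A * (1/θ) + t * (1/θ) := by ring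
        linarith
      · rw [abs_of_nonneg (by linarith : (0:ℝ) ≤ p - 2)]
        apply lemmaUp p _ _ _ hp2 hAt0.le hBt0.le hL1
        have h6 : B * (1/θ) ≥ 0 := by positivity
        have h7 : (1 + 1/θ) * (B + t) = B + t + B * (1/θ) + t * (1/θ) := by ring
        linarith
    have h4 := Phi_ge p B t hp hB ht
    have hmain : Phi p A t ≤ 2 * p * (1 + 1/θ) ^ |p - 2| * Phi p B t := by
      have k1 : Phi p A t ≤ (1 + 1/θ) ^ |p - 2| * ((B + t) ^ (p - 2) * t ^ 2) := by
        calc Phi p A t ≤ (A + t) ^ (p - 2) * t ^ 2 := hψA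
          _ ≤ ((1 + 1/θ) ^ |p - 2| * (B + t) ^ (p - 2)) * t ^ 2 :=
              mul_le_mul_of_nonneg_right hstep (sq_nonneg t)
          _ = (1 + 1/θ) ^ |p - 2| * ((B + t) ^ (p - 2) * t ^ 2) := by ring
      calc Phi p A t ≤ (1 + 1/θ) ^ |p - 2| * ((B + t) ^ (p - 2) * t ^ 2) := k1
        _ ≤ (1 + 1/θ) ^ |p - 2| * (2 * p * Phi p B t) := mul_le_mul_of_nonneg_left h4 hM.le
        _ = 2 * p * (1 + 1/θ) ^ |p - 2| * Phi p B t := by ring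
    constructor <;> · linarith [mul_nonneg hε0.le hPAd, mul_nonneg hε0.le hPBd]
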